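/- arXiv:2412.17733 — 2 statements merged into one kernel-verified Lean document; each statement's English description precedes it below -/
import Mathlib

section
/- Suppose w, κ > 0 with w > 1 or κ > 1, and let c, ω_c ∈ ℝ satisfy c²ω_c² = λ₊(ω_c), where λ₊(K) = ((1+κ)(1+w) + ρ(K))/2 and ρ(K) = sqrt((1+w)²(1−κ)² + 4κ((1−w)²+4w cos²(K))). Then 1 + κ − c²ω_c² ≠ 0; indeed |1 + κ − c²ω_c²| ≥ (1+κ)(w−1)/2 when w > 1, and |1 + κ − c²ω_c²| ≥ κ − 1 when w = 1 and κ > 1. -/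
/-- Under the dispersion relation c²ω_c² = λ₊(ω_c), the quantity 1+κ−c²ω_c² is nonzero,
    with uniform lower bounds. -/
theorem stmt2 (w κ c ω : ℝ) (hw : 0 < w) (hκ : 0 < κ) (h1 : 1 < w ∨ 1 < κ)
    (hdisp : c ^ 2 * ω ^ 2 =
      ((1 + κ) * (1 + w) +
        Real.sqrt ((1 + w) ^ 2 * (1 - κ) ^ 2
          + 4 * κ * ((1 - w) ^ 2 + 4 * w * (Real.cos ω) ^ 2))) / 2) :
    1 + κ - c ^ 2 * ω ^ 2 ≠ 0 ∧
    (1 < w → (1 + κ) * (w - 1) / 2 ≤ |1 + κ - c ^ 2 * ω ^ 2|) ∧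
    (w = 1 → 1 < κ → κ - 1 ≤ |1 + κ - c ^ 2 * ω ^ 2|) := by
  set A : ℝ := (1 + w) ^ 2 * (1 - κ) ^ 2
          + 4 * κ * ((1 - w) ^ 2 + 4 * (Real.cos ω) ^ 2 * w) with hAdef
  have hArw : (1 + w) ^ 2 * (1 - κ) ^ 2
          + 4 * κ * ((1 - w) ^ 2 + 4 * w * (Real.cos ω) ^ 2) = A := by rw [hAdef]; ring
  rw [hArw] at hdisp
  have hA : 0 ≤ A := by positivity
  set S : ℝ := Real.sqrt A with hSdef
  have hS : 0 ≤ S := Real.sqrt_nonneg A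
  have hS2 : S ^ 2 = A := Real.sq_sqrt hA
  have hE : 1 + κ - c ^ 2 * ω ^ 2 = ((1 + κ) * (1 - w) - S) / 2 := by
    rw [hdisp]; ring
  refine ⟨?_, ?_, ?_⟩
  · intro h0
    rw [hE] at h0
    have hSeq : S = (1 + κ) * (1 - w) := by linarith [div_eq_zero_iff.mp h0]
    rcases eq_or_ne κ 1 with hk1 | hk1
    · rcases h1 with hw1 | hk1'
      · nlinarith
      · rw [hk1] at hk1'; exact absurd hk1' (lt_irrefl 1)
    · have hd : ((1 + κ) * (1 - w)) ^ 2 < A := by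
        have h0' : (1 - κ) ^ 2 > 0 :=
          pow_two_pos_of_ne_zero (sub_ne_zero.mpr (Ne.symm hk1))
        nlinarith [mul_pos hw h0',
          mul_nonneg (mul_nonneg hκ.le hw.le) (sq_nonneg (Real.cos ω))]
      nlinarith
  · intro hw1
    rw [hE, abs_of_nonpos (by nlinarith)]
    nlinarith
  · intro hw1 hk1
    subst hw1
    rw [hE, abs_of_nonpos (by nlinarith)]
    have h2 : 2 * (κ - 1) ≤ S := by
      rw [hSdef]
      have : (2 * (κ - 1)) ^ 2 ≤ A := by nlinarith [sq_nonneg (Real.cos ω)]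
      nlinarith [Real.sq_sqrt hA, Real.sqrt_nonneg A]
    linarith
end

section
/- Let w, κ > 0 and suppose c, ω_c satisfy c²ω_c² = λ₊(ω_c). Set v₁ = e^{iω_c} + κe^{−iω_c} and v₂ = 1 + κ − c²ω_c². Then w|v₁|² + v₂² = −ρ(ω_c)·v₂, where ρ(K) = sqrt((1+w)²(1−κ)² + 4κ((1−w)² + 4w cos²(K))). -/
/-- With v₁ = e^{iω_c}+κe^{−iω_c}, v₂ = 1+κ−c²ω_c², one has w|v₁|² + v₂² = −ρ(ω_c)v₂. -/
theorem stmt6 (w κ c ω : ℝ) (hw : 0 < w) (hκ : 0 < κ)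
    (hdisp : c ^ 2 * ω ^ 2 =
      ((1 + κ) * (1 + w) +
        Real.sqrt ((1 + w) ^ 2 * (1 - κ) ^ 2
          + 4 * κ * ((1 - w) ^ 2 + 4 * w * (Real.cos ω) ^ 2))) / 2) :
    let v₁ : ℂ := Complex.exp (Complex.I * ω) + κ * Complex.exp (-(Complex.I * ω))
    let v₂ : ℝ := 1 + κ - c ^ 2 * ω ^ 2
    let ρ : ℝ := Real.sqrt ((1 + w) ^ 2 * (1 - κ) ^ 2
          + 4 * κ * ((1 - w) ^ 2 + 4 * w * (Real.cos ω) ^ 2))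
    w * ‖v₁‖ ^ 2 + v₂ ^ 2 = -ρ * v₂ := by
  intro v₁ v₂ ρ
  have harg : 0 ≤ (1 + w) ^ 2 * (1 - κ) ^ 2
      + 4 * κ * ((1 - w) ^ 2 + 4 * w * (Real.cos ω) ^ 2) := by positivity
  have hρ2 : ρ ^ 2 = (1 + w) ^ 2 * (1 - κ) ^ 2
      + 4 * κ * ((1 - w) ^ 2 + 4 * w * (Real.cos ω) ^ 2) := Real.sq_sqrt harg
  have hv1 : v₁ = Complex.mk ((1 + κ) * Real.cos ω) ((1 - κ) * Real.sin ω) := by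
    simp only [v₁]
    rw [mul_comm Complex.I (ω : ℂ), ← neg_mul, Complex.exp_mul_I, Complex.exp_mul_I]
    apply Complex.ext <;>
      simp [Complex.cos_ofReal_re, Complex.sin_ofReal_re] <;> ring
  have habs : ‖v₁‖ ^ 2 = (1 - κ) ^ 2 + 4 * κ * (Real.cos ω) ^ 2 := by
    rw [Complex.sq_norm, hv1]
    have hs : Real.sin ω ^ 2 = 1 - Real.cos ω ^ 2 := by
      have := Real.sin_sq_add_cos_sq ω; linarith
    simp [Complex.normSq_mk]
    nlinarith [hs]
  have hv2 : v₂ = ((1 + κ) * (1 - w) - ρ) / 2 := by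
    simp only [v₂, hdisp, ρ]; ring
  rw [habs, hv2]
  nlinarith [hρ2]
end
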